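/- Assume f is L_f-Lipschitz on X × Y, f̃*_hi = sup_{x∈X} f̃*(x) is finite, the error-bound assumption holds with constants θ̄ > 0 and function ω, and μ ≥ (f̃*_hi − f̃_low)/θ̄². Then f*_μ ≤ f* + L_f · ω( √( μ⁻¹( f̃*_hi − f̃_low ) ) ). -/

import Mathlib

noncomputable section

open Set

open scoped RealInnerProductSpace

/-- Euclidean space `ℝⁿ`. -/
abbrev En (n : ℕ) := EuclideanSpace ℝ (Fin n)

/-- Componentwise positive part `[v]₊` of a vector `v ∈ ℝˡ`. -/
def posPart {l : ℕ} (v : En l) : En l := WithLp.toLp 2 (fun i => max (v i) 0)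

/-- The Euclidean distance `‖(x,y) − (x',y')‖` on `ℝⁿ × ℝᵐ`. -/
def prodDist {n m : ℕ} (p q : En n × En m) : ℝ :=
  Real.sqrt (‖p.1 - q.1‖ ^ 2 + ‖p.2 - q.2‖ ^ 2)

/-- `φ` is `L`-Lipschitz on `X × Y` (with the Euclidean norm on `ℝⁿ × ℝᵐ`). -/
def LipOnXY {n m : ℕ} (φ : En n × En m → ℝ) (L : ℝ)
    (X : Set (En n)) (Y : Set (En m)) : Prop :=
  ∀ p ∈ X ×ˢ Y, ∀ q ∈ X ×ˢ Y, |φ p - φ q| ≤ L * prodDist p q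

/-- The Slater condition with constant `G`. -/
def Slater {n m l : ℕ} (gt : En n × En m → En l) (X : Set (En n)) (Y : Set (En m))
    (G : ℝ) : Prop :=
  ∀ x ∈ X, ∃ zhat ∈ Y, ∀ i, gt (x, zhat) i ≤ -G

/-- The lower-level value function `f̃*(x) = inf { f̃(x,z) : z ∈ Y, g̃(x,z) ≤ 0 }`. -/
def ftStar {n m l : ℕ} (ft : En n × En m → ℝ) (gt : En n × En m → En l)
    (Y : Set (En m)) (x : En n) : ℝ :=
  sInf {v | ∃ z ∈ Y, (∀ i, gt (x, z) i ≤ 0) ∧ v = ft (x, z)}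

/-- `f̃*_hi = sup_{x ∈ X} f̃*(x)`. -/
def ftStarHi {n m l : ℕ} (ft : En n × En m → ℝ) (gt : En n × En m → En l)
    (X : Set (En n)) (Y : Set (En m)) : ℝ :=
  sSup {v | ∃ x ∈ X, v = ftStar ft gt Y x}

/-- `f̃_low = inf { f̃(x,y) : (x,y) ∈ X × Y }`. -/
def ftLow {n m : ℕ} (ft : En n × En m → ℝ) (X : Set (En n)) (Y : Set (En m)) : ℝ :=
  sInf {v | ∃ x ∈ X, ∃ y ∈ Y, v = ft (x, y)}

/-- `f̃_hi = sup { f̃(x,y) : (x,y) ∈ X × Y }`. -/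
def ftHi {n m : ℕ} (ft : En n × En m → ℝ) (X : Set (En n)) (Y : Set (En m)) : ℝ :=
  sSup {v | ∃ x ∈ X, ∃ y ∈ Y, v = ft (x, y)}

/-- `f_low = inf { f(x,y) : (x,y) ∈ X × Y }`. -/
def fLow {n m : ℕ} (f : En n × En m → ℝ) (X : Set (En n)) (Y : Set (En m)) : ℝ :=
  sInf {v | ∃ x ∈ X, ∃ y ∈ Y, v = f (x, y)}

/-- `g̃_hi = sup { ‖g̃(x,y)‖ : (x,y) ∈ X × Y }`. -/
def gtHi {n m l : ℕ} (gt : En n × En m → En l) (X : Set (En n)) (Y : Set (En m)) : ℝ :=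
  sSup {v | ∃ x ∈ X, ∃ y ∈ Y, v = ‖gt (x, y)‖}

/-- The lower-level penalty function `P̃_μ(x,z) = f̃(x,z) + μ ‖[g̃(x,z)]₊‖²`. -/
def Ptilde {n m l : ℕ} (ft : En n × En m → ℝ) (gt : En n × En m → En l)
    (μ : ℝ) (x : En n) (z : En m) : ℝ :=
  ft (x, z) + μ * ‖posPart (gt (x, z))‖ ^ 2

/-- `inf_{z ∈ Y} P̃_μ(x,z)`. -/
def PtildeMinVal {n m l : ℕ} (ft : En n × En m → ℝ) (gt : En n × En m → En l)
    (Y : Set (En m)) (μ : ℝ) (x : En n) : ℝ :=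
  sInf {w | ∃ z ∈ Y, w = Ptilde ft gt μ x z}

/-- The minimax penalty function `P_{ρ,μ}(x,y,z) = f(x,y) + ρ (P̃_μ(x,y) − P̃_μ(x,z))`. -/
def Prhomu {n m l : ℕ} (f ft : En n × En m → ℝ) (gt : En n × En m → En l)
    (ρ μ : ℝ) (x : En n) (y z : En m) : ℝ :=
  f (x, y) + ρ * (Ptilde ft gt μ x y - Ptilde ft gt μ x z)

/-- `sup_{z ∈ Y} P_{ρ,μ}(x,y,z)`. -/
def maxPc {n m l : ℕ} (f ft : En n × En m → ℝ) (gt : En n × En m → En l)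
    (Y : Set (En m)) (ρ μ : ℝ) (x : En n) (y : En m) : ℝ :=
  sSup {v | ∃ z ∈ Y, v = Prhomu f ft gt ρ μ x y z}

/-- `inf_{(x,y)∈X×Y} sup_{z∈Y} P_{ρ,μ}(x,y,z)`. -/
def minimaxValc {n m l : ℕ} (f ft : En n × En m → ℝ) (gt : En n × En m → En l)
    (X : Set (En n)) (Y : Set (En m)) (ρ μ : ℝ) : ℝ :=
  sInf {v | ∃ x ∈ X, ∃ y ∈ Y, v = maxPc f ft gt Y ρ μ x y}

/-- `(x,y,z)` is an ε-optimal solution of `min_{(x,y)∈X×Y} max_{z∈Y} P_{ρ,μ}(x,y,z)`. -/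
def epsOptimalc {n m l : ℕ} (f ft : En n × En m → ℝ) (gt : En n × En m → En l)
    (X : Set (En n)) (Y : Set (En m)) (ρ μ ε : ℝ) (x : En n) (y z : En m) : Prop :=
  maxPc f ft gt Y ρ μ x y - Prhomu f ft gt ρ μ x y z ≤ ε ∧
  Prhomu f ft gt ρ μ x y z - minimaxValc f ft gt X Y ρ μ ≤ ε

/-- The constrained bilevel optimal value
`f* = inf { f(x,y) : x ∈ X, y ∈ Y, g̃(x,y) ≤ 0, f̃(x,y) = f̃*(x) }`. -/
def fStarC {n m l : ℕ} (f ft : En n × En m → ℝ) (gt : En n × En m → En l)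
    (X : Set (En n)) (Y : Set (En m)) : ℝ :=
  sInf {v | ∃ x ∈ X, ∃ y ∈ Y,
    (∀ i, gt (x, y) i ≤ 0) ∧ ft (x, y) = ftStar ft gt Y x ∧ v = f (x, y)}

/-- The penalized bilevel optimal value
`f*_μ = inf { f(x,y) : x ∈ X, y ∈ Y, P̃_μ(x,y) = inf_{z∈Y} P̃_μ(x,z) }`. -/
def fStarMu {n m l : ℕ} (f ft : En n × En m → ℝ) (gt : En n × En m → En l)
    (X : Set (En n)) (Y : Set (En m)) (μ : ℝ) : ℝ :=
  sInf {v | ∃ x ∈ X, ∃ y ∈ Y, Ptilde ft gt μ x y = PtildeMinVal ft gt Y μ x ∧ v = f (x, y)}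

/-- The set `S_θ(x)` of θ-approximately feasible lower-level minimizers. -/
def Sθ {n m l : ℕ} (ft : En n × En m → ℝ) (gt : En n × En m → En l)
    (Y : Set (En m)) (θ : ℝ) (x : En n) : Set (En m) :=
  {z | z ∈ Y ∧ ‖posPart (gt (x, z))‖ ≤ θ ∧
    ft (x, z) = sInf {w | ∃ z' ∈ Y, ‖posPart (gt (x, z'))‖ ≤ θ ∧ w = ft (x, z')}}

/-- The error-bound assumption with constants `θbar` and function `ω`. -/
def ErrorBound {n m l : ℕ} (ft : En n × En m → ℝ) (gt : En n × En m → En l)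
    (X : Set (En n)) (Y : Set (En m)) (θbar : ℝ) (ω : ℝ → ℝ) : Prop :=
  0 < θbar ∧ (∀ t, 0 ≤ t → 0 ≤ ω t) ∧ (∀ a b, 0 ≤ a → a ≤ b → ω a ≤ ω b) ∧
    Filter.Tendsto ω (nhdsWithin 0 (Set.Ioi 0)) (nhds 0) ∧
    ∀ x ∈ X, ∀ z ∈ Sθ ft gt Y 0 x, ∀ θ ∈ Set.Icc 0 θbar,
      Metric.infDist z (Sθ ft gt Y θ x) ≤ ω θ


lemma posPart_norm_le_zero_iff {l : ℕ} (v : En l) : ‖posPart v‖ ≤ 0 ↔ ∀ i, v i ≤ 0 := by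
  rw [norm_le_zero_iff]
  constructor
  · intro h i
    have h2 : max (v i) 0 = 0 := congrArg (fun w : En l => w i) h
    exact max_eq_right_iff.mp h2
  · intro h
    refine PiLp.ext fun j => ?_
    show max (v j) 0 = 0
    simp [h j]

lemma posPart_cont {l : ℕ} : Continuous (posPart (l := l)) := by
  apply (PiLp.continuous_toLp 2 _).comp
  apply continuous_pi
  intro i
  exact (PiLp.continuous_apply 2 _ i).max continuous_const

theorem stmt10 {n m l : ℕ} (hn : 0 < n) (hm : 0 < m) (hl : 0 < l)
    (X : Set (En n)) (Y : Set (En m))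
    (hXne : X.Nonempty) (hXcpt : IsCompact X)
    (hYne : Y.Nonempty) (hYcpt : IsCompact Y) (hYconv : Convex ℝ Y)
    (f ft : En n × En m → ℝ) (gt : En n × En m → En l)
    (hfc : ContinuousOn f (X ×ˢ Y)) (hftc : ContinuousOn ft (X ×ˢ Y))
    (hgtc : ContinuousOn gt (X ×ˢ Y))
    (hftconv : ∀ x ∈ X, ConvexOn ℝ Y fun z => ft (x, z))
    (hgtconv : ∀ x ∈ X, ∀ i, ConvexOn ℝ Y fun z => gt (x, z) i)
    (hfeas : ∀ x ∈ X, ∃ z ∈ Y, ∀ i, gt (x, z) i ≤ 0)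
    (Lf : ℝ) (hLf : 0 ≤ Lf) (hLipf : LipOnXY f Lf X Y)
    -- `f̃*_hi` is finite
    (hbdd : BddAbove {v | ∃ x ∈ X, v = ftStar ft gt Y x})
    (θbar : ℝ) (ω : ℝ → ℝ) (herr : ErrorBound ft gt X Y θbar ω)
    (μ : ℝ) (hμpos : 0 < μ)
    (hμbig : (ftStarHi ft gt X Y - ftLow ft X Y) / θbar ^ 2 ≤ μ) :
    fStarMu f ft gt X Y μ ≤ fStarC f ft gt X Y +
      Lf * ω (Real.sqrt (μ⁻¹ * (ftStarHi ft gt X Y - ftLow ft X Y))) := by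
  classical
  obtain ⟨hθbar, hωpos, hωmono, _hωtend, hEB⟩ := herr
  set D := ftStarHi ft gt X Y - ftLow ft X Y with hDdef
  set θ := Real.sqrt (μ⁻¹ * D) with hθdef
  have hXYc : IsCompact (X ×ˢ Y) := hXcpt.prod hYcpt
  have hftset : {v | ∃ x ∈ X, ∃ y ∈ Y, v = ft (x, y)} = ft '' (X ×ˢ Y) := by
    ext v; constructor
    · rintro ⟨x, hx, y, hy, rfl⟩; exact ⟨(x, y), ⟨hx, hy⟩, rfl⟩
    · rintro ⟨⟨x, y⟩, ⟨hx, hy⟩, rfl⟩; exact ⟨x, hx, y, hy, rfl⟩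
  have hftbdd : BddBelow {v | ∃ x ∈ X, ∃ y ∈ Y, v = ft (x, y)} := by
    rw [hftset]; exact (hXYc.image_of_continuousOn hftc).bddBelow
  have hfset : {v | ∃ x ∈ X, ∃ y ∈ Y, v = f (x, y)} = f '' (X ×ˢ Y) := by
    ext v; constructor
    · rintro ⟨x, hx, y, hy, rfl⟩; exact ⟨(x, y), ⟨hx, hy⟩, rfl⟩
    · rintro ⟨⟨x, y⟩, ⟨hx, hy⟩, rfl⟩; exact ⟨x, hx, y, hy, rfl⟩
  have hfbdd : BddBelow {v | ∃ x ∈ X, ∃ y ∈ Y, v = f (x, y)} := by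
    rw [hfset]; exact (hXYc.image_of_continuousOn hfc).bddBelow
  have hfStarMubdd : BddBelow {v | ∃ x ∈ X, ∃ y ∈ Y,
      Ptilde ft gt μ x y = PtildeMinVal ft gt Y μ x ∧ v = f (x, y)} := by
    apply hfbdd.mono
    rintro v ⟨x, hx, y, hy, _, rfl⟩; exact ⟨x, hx, y, hy, rfl⟩
  have hftlow : ∀ x ∈ X, ∀ z ∈ Y, ftLow ft X Y ≤ ft (x, z) := fun x hx z hz =>
    csInf_le hftbdd ⟨x, hx, z, hz, rfl⟩
  have hgx : ∀ x ∈ X, ContinuousOn (fun z => gt (x, z)) Y := fun x hx =>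
    hgtc.comp (Continuous.prodMk_right x).continuousOn (fun z hz => ⟨hx, hz⟩)
  have hfx : ∀ x ∈ X, ContinuousOn (fun z => ft (x, z)) Y := fun x hx =>
    hftc.comp (Continuous.prodMk_right x).continuousOn (fun z hz => ⟨hx, hz⟩)
  have hPcont : ∀ x ∈ X, ContinuousOn (fun z => Ptilde ft gt μ x z) Y := by
    intro x hx
    apply (hfx x hx).add
    apply continuousOn_const.mul
    exact ((continuous_norm.comp posPart_cont).comp_continuousOn (hgx x hx)).pow 2
  have main : ∀ x ∈ X, ∀ y ∈ Y, (∀ i, gt (x, y) i ≤ 0) → ft (x, y) = ftStar ft gt Y x →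
      fStarMu f ft gt X Y μ ≤ f (x, y) + Lf * ω θ := by
    intro x hx y hy hg hval
    obtain ⟨zμ, hzY, hzmin⟩ := hYcpt.exists_isMinOn hYne (hPcont x hx)
    have hzmin' : ∀ z ∈ Y, Ptilde ft gt μ x zμ ≤ Ptilde ft gt μ x z := fun z hz =>
      isMinOn_iff.mp hzmin z hz
    have hPimg : {w | ∃ z ∈ Y, w = Ptilde ft gt μ x z}
        = (fun z => Ptilde ft gt μ x z) '' Y := by
      ext w; constructor
      · rintro ⟨z, hz, rfl⟩; exact ⟨z, hz, rfl⟩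
      · rintro ⟨z, hz, rfl⟩; exact ⟨z, hz, rfl⟩
    have hPbdd : BddBelow {w | ∃ z ∈ Y, w = Ptilde ft gt μ x z} := by
      rw [hPimg]; exact (hYcpt.image_of_continuousOn (hPcont x hx)).bddBelow
    have hPmin : Ptilde ft gt μ x zμ = PtildeMinVal ft gt Y μ x := by
      apply le_antisymm
      · exact le_csInf ⟨_, zμ, hzY, rfl⟩ (by rintro w ⟨z, hz, rfl⟩; exact hzmin' z hz)
      · exact csInf_le hPbdd ⟨zμ, hzY, rfl⟩
    set σ := ‖posPart (gt (x, zμ))‖ with hσdef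
    have hσ0 : 0 ≤ σ := norm_nonneg _
    have hyfeas : ‖posPart (gt (x, y))‖ ≤ 0 := (posPart_norm_le_zero_iff _).mpr hg
    have hstar : Ptilde ft gt μ x zμ ≤ ftStar ft gt Y x := by
      apply le_csInf
      · obtain ⟨z, hz, hgz⟩ := hfeas x hx
        exact ⟨ft (x, z), z, hz, hgz, rfl⟩
      · rintro w ⟨z, hz, hgz, rfl⟩
        have h0 : ‖posPart (gt (x, z))‖ = 0 :=
          le_antisymm ((posPart_norm_le_zero_iff _).mpr hgz) (norm_nonneg _)
        calc Ptilde ft gt μ x zμ ≤ Ptilde ft gt μ x z := hzmin' z hz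
          _ = ft (x, z) := by simp [Ptilde, h0]
    have hhi : ftStar ft gt Y x ≤ ftStarHi ft gt X Y := le_csSup hbdd ⟨x, hx, rfl⟩
    have hPz : Ptilde ft gt μ x zμ = ft (x, zμ) + μ * σ ^ 2 := rfl
    have hμσ : μ * σ ^ 2 ≤ D := by
      have h1 := hstar.trans hhi
      rw [hPz] at h1
      have h2 := hftlow x hx zμ hzY
      rw [hDdef]; linarith
    have hD0 : 0 ≤ D := le_trans (by positivity) hμσ
    have hσθ : σ ≤ θ := by
      have hinv : μ⁻¹ * (μ * σ ^ 2) ≤ μ⁻¹ * D :=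
        mul_le_mul_of_nonneg_left hμσ (inv_nonneg.mpr hμpos.le)
      rw [inv_mul_cancel_left₀ hμpos.ne'] at hinv
      calc σ = Real.sqrt (σ ^ 2) := (Real.sqrt_sq hσ0).symm
        _ ≤ θ := Real.sqrt_le_sqrt hinv
    have hθθbar : θ ≤ θbar := by
      have hb2 : (0:ℝ) < θbar ^ 2 := by positivity
      rw [div_le_iff₀ hb2] at hμbig
      have h1 : μ⁻¹ * D ≤ θbar ^ 2 := by
        calc μ⁻¹ * D ≤ μ⁻¹ * (μ * θbar ^ 2) :=
              mul_le_mul_of_nonneg_left hμbig (inv_nonneg.mpr hμpos.le)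
          _ = θbar ^ 2 := inv_mul_cancel_left₀ hμpos.ne' _
      calc θ ≤ Real.sqrt (θbar ^ 2) := Real.sqrt_le_sqrt h1
        _ = θbar := Real.sqrt_sq hθbar.le
    set Tσ := {w | ∃ z' ∈ Y, ‖posPart (gt (x, z'))‖ ≤ σ ∧ w = ft (x, z')} with hTσ
    have hTσbdd : BddBelow Tσ := by
      apply hftbdd.mono
      rintro w ⟨z', hz', _, rfl⟩; exact ⟨x, hx, z', hz', rfl⟩
    have hzμmem : ft (x, zμ) ∈ Tσ := ⟨zμ, hzY, le_refl σ, rfl⟩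
    have hzμval : ft (x, zμ) = sInf Tσ := by
      apply le_antisymm
      · apply le_csInf ⟨_, hzμmem⟩
        rintro w ⟨z', hz', hσz', rfl⟩
        have hP : ft (x, zμ) + μ * σ ^ 2
            ≤ ft (x, z') + μ * ‖posPart (gt (x, z'))‖ ^ 2 := hzmin' z' hz'
        have hsq : μ * ‖posPart (gt (x, z'))‖ ^ 2 ≤ μ * σ ^ 2 :=
          mul_le_mul_of_nonneg_left (pow_le_pow_left₀ (norm_nonneg _) hσz' 2) hμpos.le
        linarith
      · exact csInf_le hTσbdd hzμmem
    have hzμS : zμ ∈ Sθ ft gt Y σ x := ⟨hzY, le_refl σ, hzμval⟩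
    have hT0eq : {w | ∃ z' ∈ Y, ‖posPart (gt (x, z'))‖ ≤ 0 ∧ w = ft (x, z')}
        = {v | ∃ z ∈ Y, (∀ i, gt (x, z) i ≤ 0) ∧ v = ft (x, z)} := by
      ext w; constructor
      · rintro ⟨z, hz, h0, rfl⟩; exact ⟨z, hz, (posPart_norm_le_zero_iff _).mp h0, rfl⟩
      · rintro ⟨z, hz, h0, rfl⟩; exact ⟨z, hz, (posPart_norm_le_zero_iff _).mpr h0, rfl⟩
    have hyS0 : y ∈ Sθ ft gt Y 0 x := by
      refine ⟨hy, hyfeas, ?_⟩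
      rw [hT0eq]; exact hval
    have hEBσ : Metric.infDist y (Sθ ft gt Y σ x) ≤ ω σ :=
      hEB x hx y hyS0 σ ⟨hσ0, hσθ.trans hθθbar⟩
    have key : ∀ ε > 0, fStarMu f ft gt X Y μ ≤ f (x, y) + Lf * ω θ + ε := by
      intro ε hε
      have hεL : 0 < ε / (Lf + 1) := by positivity
      have hlt : Metric.infDist y (Sθ ft gt Y σ x) < ω σ + ε / (Lf + 1) :=
        lt_of_le_of_lt hEBσ (lt_add_of_pos_right _ hεL)
      obtain ⟨w, hwS, hwd⟩ := (Metric.infDist_lt_iff ⟨zμ, hzμS⟩).mp hlt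
      obtain ⟨hwY, hwσ, hwval⟩ := hwS
      have hwP : Ptilde ft gt μ x w = PtildeMinVal ft gt Y μ x := by
        apply le_antisymm
        · rw [← hPmin]
          have h1 : ft (x, w) = ft (x, zμ) := by rw [hwval, ← hzμval]
          have h2 : μ * ‖posPart (gt (x, w))‖ ^ 2 ≤ μ * σ ^ 2 :=
            mul_le_mul_of_nonneg_left (pow_le_pow_left₀ (norm_nonneg _) hwσ 2) hμpos.le
          show ft (x, w) + μ * ‖posPart (gt (x, w))‖ ^ 2 ≤ Ptilde ft gt μ x zμ
          rw [hPz, h1]; linarith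
        · exact csInf_le hPbdd ⟨w, hwY, rfl⟩
      have h1 : fStarMu f ft gt X Y μ ≤ f (x, w) :=
        csInf_le hfStarMubdd ⟨x, hx, w, hwY, hwP, rfl⟩
      have hdist : prodDist (x, w) (x, y) = dist w y := by
        have hd : prodDist (x, w) (x, y) = Real.sqrt (‖x - x‖ ^ 2 + ‖w - y‖ ^ 2) := rfl
        rw [hd, sub_self, norm_zero]
        simp [Real.sqrt_sq (norm_nonneg (w - y)), dist_eq_norm]
      have h2 : f (x, w) - f (x, y) ≤ Lf * prodDist (x, w) (x, y) :=
        le_trans (le_abs_self _) (hLipf (x, w) ⟨hx, hwY⟩ (x, y) ⟨hx, hy⟩)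
      have h3 : dist w y ≤ ω σ + ε / (Lf + 1) := by rw [dist_comm]; exact hwd.le
      have hωσθ : ω σ ≤ ω θ := hωmono σ θ hσ0 hσθ
      have hLd : Lf * prodDist (x, w) (x, y) ≤ Lf * (ω θ + ε / (Lf + 1)) := by
        rw [hdist]
        exact mul_le_mul_of_nonneg_left (h3.trans (by linarith)) hLf
      have hq : Lf / (Lf + 1) ≤ 1 := (div_le_one (by positivity)).mpr (by linarith)
      have hLε : Lf * (ε / (Lf + 1)) ≤ ε := by
        have he : Lf * (ε / (Lf + 1)) = (Lf / (Lf + 1)) * ε := by ring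
        rw [he]
        calc (Lf / (Lf + 1)) * ε ≤ 1 * ε := mul_le_mul_of_nonneg_right hq hε.le
          _ = ε := one_mul ε
      have hexp : Lf * (ω θ + ε / (Lf + 1)) = Lf * ω θ + Lf * (ε / (Lf + 1)) := by ring
      linarith
    exact le_of_forall_pos_le_add key
  obtain ⟨x0, hx0⟩ := hXne
  set F := {z ∈ Y | ∀ i, gt (x0, z) i ≤ 0} with hF
  have hFsub : F ⊆ Y := fun z hz => hz.1
  have hFclosed : IsClosed F := by
    have h1 : F = Y ∩ (fun z => gt (x0, z)) ⁻¹' {w : En l | ∀ i, w i ≤ 0} := by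
      ext z
      simp only [hF, Set.mem_inter_iff, Set.mem_preimage, Set.mem_setOf_eq, Set.mem_sep_iff]
    rw [h1]
    apply ContinuousOn.preimage_isClosed_of_isClosed (hgx x0 hx0) hYcpt.isClosed
    have h2 : {w : En l | ∀ i, w i ≤ 0} = ⋂ i, {w : En l | w i ≤ 0} := by
      ext w; simp
    rw [h2]
    refine isClosed_iInter fun i => isClosed_le ?_ continuous_const
    exact PiLp.continuous_apply 2 _ i
  have hFcpt : IsCompact F := hYcpt.of_isClosed_subset hFclosed hFsub
  have hFne : F.Nonempty := by
    obtain ⟨z, hz, hgz⟩ := hfeas x0 hx0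
    exact ⟨z, hz, hgz⟩
  obtain ⟨y0, hy0F, hy0min⟩ := hFcpt.exists_isMinOn hFne ((hfx x0 hx0).mono hFsub)
  have hy0val : ft (x0, y0) = ftStar ft gt Y x0 := by
    apply le_antisymm
    · show ft (x0, y0) ≤ sInf {v | ∃ z ∈ Y, (∀ i, gt (x0, z) i ≤ 0) ∧ v = ft (x0, z)}
      refine le_csInf ⟨ft (x0, y0), ⟨y0, hy0F.1, hy0F.2, rfl⟩⟩ ?_
      rintro w ⟨z, hz, hgz, rfl⟩
      exact isMinOn_iff.mp hy0min z ⟨hz, hgz⟩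
    · refine csInf_le (hftbdd.mono ?_) ⟨y0, hy0F.1, hy0F.2, rfl⟩
      rintro w ⟨z, hz, _, rfl⟩; exact ⟨x0, hx0, z, hz, rfl⟩
  have hne : {v | ∃ x ∈ X, ∃ y ∈ Y, (∀ i, gt (x, y) i ≤ 0) ∧
      ft (x, y) = ftStar ft gt Y x ∧ v = f (x, y)}.Nonempty :=
    ⟨f (x0, y0), x0, hx0, y0, hy0F.1, hy0F.2, hy0val, rfl⟩
  rw [← sub_le_iff_le_add]
  apply le_csInf hne
  rintro v ⟨x, hx, y, hy, hg, hval, rfl⟩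
  have := main x hx y hy hg hval
  linarith
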